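/- Let (𝒳,μ) be a probability space, p≥2 a real number, M, K ∈ ℕ⁺, ψ:𝒳→[0,∞) measurable with ∫_𝒳 ψ^{2p} dμ < ∞, and g₁,…,g_K:𝒳→ℝ measurable with |g_j(x)| ≤ ψ(x)² for all j and all x∈𝒳. Let X₁,…,X_M be i.i.d. random elements of 𝒳 with law μ. Then E[ max_{1≤j≤K} | M^{−1} Σ_{i=1}^M g_j(X_i) − ∫_𝒳 g_j dμ |^p ]^{1/p} ≤ 16 K^{1/p} √p ( ∫_𝒳 ψ^{2p} dμ )^{1/p} / √M. -/

import Mathlib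

open scoped BigOperators
open MeasureTheory

noncomputable section

open MeasureTheory

namespace MaximalIneqAux

open Finset

/-! ### Elementary helpers -/

/-- sign attached to a boolean -/
def epsB (b : Bool) : ℝ := if b then -1 else 1

lemma abs_epsB (b : Bool) : |epsB b| = 1 := by cases b <;> simp [epsB]

/-- MGF bound for Rademacher sums, finite-sum form. -/
lemma sum_exp_le (M : ℕ) (b : Fin M → ℝ) :
    ∑ s : Fin M → Bool, Real.exp (∑ i, epsB (s i) * b i)
      ≤ 2 ^ M * Real.exp ((∑ i, (b i) ^ 2) / 2) := by
  have h1 : ∀ s : Fin M → Bool, Real.exp (∑ i, epsB (s i) * b i)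
      = ∏ i, Real.exp (epsB (s i) * b i) := fun s => Real.exp_sum _ _
  calc ∑ s : Fin M → Bool, Real.exp (∑ i, epsB (s i) * b i)
      = ∑ s : Fin M → Bool, ∏ i, Real.exp (epsB (s i) * b i) := by simp_rw [h1]
    _ = ∏ i, ∑ c : Bool, Real.exp (epsB c * b i) :=
        (Fintype.prod_sum (fun (i : Fin M) (c : Bool) => Real.exp (epsB c * b i))).symm
    _ ≤ ∏ i, 2 * Real.exp ((b i) ^ 2 / 2) := by
        refine Finset.prod_le_prod (fun i _ => ?_) (fun i _ => ?_)
        · positivity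
        · have : ∑ c : Bool, Real.exp (epsB c * b i)
              = Real.exp (b i) + Real.exp (-(b i)) := by
            rw [Fintype.sum_bool]; simp [epsB]; ring
          rw [this]
          have hcosh := Real.cosh_le_exp_half_sq (b i)
          rw [Real.cosh_eq] at hcosh
          nlinarith [hcosh]
    _ = 2 ^ M * Real.exp ((∑ i, (b i) ^ 2) / 2) := by
        rw [Finset.prod_mul_distrib, Finset.prod_const, ← Real.exp_sum, ← Finset.sum_div]
        simp

/-- pointwise exponential domination of a power -/
lemma abs_rpow_le_exp {p lam x : ℝ} (hp : 0 < p) (hlam : 0 < lam) :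
    |x| ^ p ≤ p ^ p / lam ^ p * (Real.exp (lam * x) + Real.exp (-(lam * x))) := by
  have h0 : (0:ℝ) ≤ lam * |x| := by positivity
  have h1 : lam * |x| ≤ p * Real.exp (lam * |x| / p) := by
    have := Real.add_one_le_exp (lam * |x| / p)
    have h2 : lam * |x| / p ≤ Real.exp (lam * |x| / p) := by linarith
    calc lam * |x| = p * (lam * |x| / p) := by field_simp
      _ ≤ p * Real.exp (lam * |x| / p) := by
          exact mul_le_mul_of_nonneg_left h2 hp.le
  have h3 : (lam * |x|) ^ p ≤ (p * Real.exp (lam * |x| / p)) ^ p :=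
    Real.rpow_le_rpow h0 h1 hp.le
  have h4 : (lam * |x|) ^ p = lam ^ p * |x| ^ p := Real.mul_rpow hlam.le (abs_nonneg x)
  have h5 : (p * Real.exp (lam * |x| / p)) ^ p
      = p ^ p * Real.exp (lam * |x|) := by
    rw [Real.mul_rpow hp.le (Real.exp_pos _).le, ← Real.exp_mul]
    congr 2
    field_simp
  have h6 : Real.exp (lam * |x|) ≤ Real.exp (lam * x) + Real.exp (-(lam * x)) := by
    rcases abs_cases x with ⟨h, _⟩ | ⟨h, _⟩
    · rw [h]; nlinarith [Real.exp_pos (-(lam * x))]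
    · rw [h, mul_neg, ← neg_mul]
      nlinarith [Real.exp_pos (lam * x)]
  have hlp : (0:ℝ) < lam ^ p := Real.rpow_pos_of_pos hlam p
  rw [h4, h5] at h3
  rw [div_mul_eq_mul_div, le_div_iff₀ hlp]
  calc |x| ^ p * lam ^ p = lam ^ p * |x| ^ p := by ring
    _ ≤ p ^ p * Real.exp (lam * |x|) := h3
    _ ≤ p ^ p * (Real.exp (lam * x) + Real.exp (-(lam * x))) := by
        refine mul_le_mul_of_nonneg_left h6 ?_
        positivity

/-- Khintchine-type inequality, finite-sum form. -/
lemma khintchine (M : ℕ) (a : Fin M → ℝ) {p : ℝ} (hp : 2 ≤ p) :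
    ∑ s : Fin M → Bool, |∑ i, epsB (s i) * a i| ^ p
      ≤ 2 ^ M * (2 * Real.exp (p / 2) * p ^ (p / 2) * (∑ i, (a i) ^ 2) ^ (p / 2)) := by
  have hp0 : (0:ℝ) < p := lt_of_lt_of_le two_pos hp
  have hs2 : (0:ℝ) ≤ ∑ i, (a i) ^ 2 := Finset.sum_nonneg fun i _ => sq_nonneg _
  rcases eq_or_lt_of_le hs2 with hσ | hσpos
  · -- all a i = 0
    have ha : ∀ i, a i = 0 := by
      intro i
      have := (Finset.sum_eq_zero_iff_of_nonneg (fun i _ => sq_nonneg (a i))).1 hσ.symm i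
        (Finset.mem_univ i)
      exact pow_eq_zero_iff (n := 2) (by norm_num) |>.1 this
    have hL : ∀ s : Fin M → Bool, |∑ i, epsB (s i) * a i| ^ p = 0 := by
      intro s
      simp [ha, Real.zero_rpow hp0.ne']
    rw [Finset.sum_congr rfl (fun s _ => hL s), Finset.sum_const]
    rw [← hσ, Real.zero_rpow (by positivity)]
    simp
  · set σ2 := ∑ i, (a i) ^ 2 with hσ2def
    have hσ2pos : 0 < σ2 := hσpos
    set σ := Real.sqrt σ2 with hσdef
    have hσpos' : 0 < σ := Real.sqrt_pos.2 hσ2pos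
    set lam := Real.sqrt p / σ with hlamdef
    have hlam : 0 < lam := div_pos (Real.sqrt_pos.2 hp0) hσpos'
    have key : ∀ s : Fin M → Bool, |∑ i, epsB (s i) * a i| ^ p
        ≤ p ^ p / lam ^ p * (Real.exp (lam * ∑ i, epsB (s i) * a i)
            + Real.exp (-(lam * ∑ i, epsB (s i) * a i))) :=
      fun s => abs_rpow_le_exp hp0 hlam
    have hsum1 : ∑ s : Fin M → Bool, Real.exp (lam * ∑ i, epsB (s i) * a i)
        ≤ 2 ^ M * Real.exp (p / 2) := by
      have h1 : ∀ s : Fin M → Bool, lam * ∑ i, epsB (s i) * a i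
          = ∑ i, epsB (s i) * (lam * a i) := by
        intro s; rw [Finset.mul_sum]; exact Finset.sum_congr rfl fun i _ => by ring
      simp_rw [h1]
      have h2 := sum_exp_le M (fun i => lam * a i)
      have h3 : ∑ i, (lam * a i) ^ 2 = p := by
        have : ∑ i, (lam * a i) ^ 2 = lam ^ 2 * σ2 := by
          rw [hσ2def, Finset.mul_sum]; exact Finset.sum_congr rfl fun i _ => by ring
        rw [this, hlamdef, div_pow, Real.sq_sqrt hp0.le, Real.sq_sqrt hσ2pos.le]
        field_simp
      rw [h3] at h2
      exact h2
    have hsum2 : ∑ s : Fin M → Bool, Real.exp (-(lam * ∑ i, epsB (s i) * a i))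
        ≤ 2 ^ M * Real.exp (p / 2) := by
      have h1 : ∀ s : Fin M → Bool, -(lam * ∑ i, epsB (s i) * a i)
          = ∑ i, epsB (s i) * (-lam * a i) := by
        intro s
        rw [Finset.mul_sum, ← Finset.sum_neg_distrib]
        exact Finset.sum_congr rfl fun i _ => by ring
      simp_rw [h1]
      have h2 := sum_exp_le M (fun i => -lam * a i)
      have h3 : ∑ i, (-lam * a i) ^ 2 = p := by
        have : ∑ i, (-lam * a i) ^ 2 = lam ^ 2 * σ2 := by
          rw [hσ2def, Finset.mul_sum]; exact Finset.sum_congr rfl fun i _ => by ring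
        rw [this, hlamdef, div_pow, Real.sq_sqrt hp0.le, Real.sq_sqrt hσ2pos.le]
        field_simp
      rw [h3] at h2
      exact h2
    have hsp : Real.sqrt p ≠ 0 := ne_of_gt (Real.sqrt_pos.2 hp0)
    have hconst : p ^ p / lam ^ p = p ^ (p/2) * σ2 ^ (p/2) := by
      have hplam : p / lam = Real.sqrt p * σ := by
        have hss : Real.sqrt p * Real.sqrt p = p := Real.mul_self_sqrt hp0.le
        rw [hlamdef, div_div_eq_mul_div, div_eq_iff hsp]
        linear_combination (-σ) * hss
      have : p ^ p / lam ^ p = (p / lam) ^ p := by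
        rw [Real.div_rpow hp0.le hlam.le]
      rw [this, hplam, Real.mul_rpow (Real.sqrt_nonneg _) (Real.sqrt_nonneg _)]
      congr 1
      · rw [Real.sqrt_eq_rpow, ← Real.rpow_mul hp0.le, show (1/2*p : ℝ) = p/2 by ring]
      · rw [Real.sqrt_eq_rpow, ← Real.rpow_mul hσ2pos.le, show (1/2*p : ℝ) = p/2 by ring]
    calc ∑ s : Fin M → Bool, |∑ i, epsB (s i) * a i| ^ p
        ≤ ∑ s : Fin M → Bool, p ^ p / lam ^ p * (Real.exp (lam * ∑ i, epsB (s i) * a i)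
            + Real.exp (-(lam * ∑ i, epsB (s i) * a i))) :=
          Finset.sum_le_sum fun s _ => key s
      _ = p ^ p / lam ^ p * (∑ s : Fin M → Bool, Real.exp (lam * ∑ i, epsB (s i) * a i)
            + ∑ s : Fin M → Bool, Real.exp (-(lam * ∑ i, epsB (s i) * a i))) := by
          rw [← Finset.mul_sum, Finset.sum_add_distrib]
      _ ≤ p ^ p / lam ^ p * (2 ^ M * Real.exp (p / 2) + 2 ^ M * Real.exp (p / 2)) := by
          refine mul_le_mul_of_nonneg_left (add_le_add hsum1 hsum2) ?_
          positivity
      _ = 2 ^ M * (2 * Real.exp (p / 2) * p ^ (p/2) * σ2 ^ (p/2)) := by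
          rw [hconst]; ring

/-- finite power-mean inequality -/
lemma sum_rpow_le {ι : Type*} (t : Finset ι) (f : ι → ℝ) (hf : ∀ i ∈ t, 0 ≤ f i)
    {p : ℝ} (hp : 1 ≤ p) :
    (∑ i ∈ t, f i) ^ p ≤ (t.card : ℝ) ^ (p - 1) * ∑ i ∈ t, f i ^ p := by
  have hp0 : (0:ℝ) < p := lt_of_lt_of_le one_pos hp
  rcases t.eq_empty_or_nonempty with rfl | hne
  · simp [Real.zero_rpow hp0.ne']
  · have hn : (0:ℝ) < t.card := by exact_mod_cast Finset.card_pos.2 hne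
    have hw : ∀ i ∈ t, (0:ℝ) ≤ (t.card : ℝ)⁻¹ := fun i _ => by positivity
    have hw' : ∑ _i ∈ t, (t.card : ℝ)⁻¹ = 1 := by
      rw [Finset.sum_const, nsmul_eq_mul]
      field_simp
    have key := Real.rpow_arith_mean_le_arith_mean_rpow t (fun _ => (t.card : ℝ)⁻¹) f hw hw' hf hp
    have h1 : ∑ i ∈ t, (t.card : ℝ)⁻¹ * f i = (t.card : ℝ)⁻¹ * ∑ i ∈ t, f i :=
      (Finset.mul_sum _ _ _).symm
    have h2 : ∑ i ∈ t, (t.card : ℝ)⁻¹ * f i ^ p = (t.card : ℝ)⁻¹ * ∑ i ∈ t, f i ^ p :=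
      (Finset.mul_sum _ _ _).symm
    rw [h1, h2] at key
    have hsf : (0:ℝ) ≤ ∑ i ∈ t, f i := Finset.sum_nonneg hf
    have h3 : ((t.card : ℝ)⁻¹ * ∑ i ∈ t, f i) ^ p
        = (t.card : ℝ)⁻¹ ^ p * (∑ i ∈ t, f i) ^ p :=
      Real.mul_rpow (by positivity) hsf
    rw [h3] at key
    have h4 : (0:ℝ) < (t.card : ℝ)⁻¹ ^ p := Real.rpow_pos_of_pos (by positivity) p
    have h5 : (∑ i ∈ t, f i) ^ p ≤ ((t.card : ℝ)⁻¹ ^ p)⁻¹ * ((t.card : ℝ)⁻¹ * ∑ i ∈ t, f i ^ p) := by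
      rw [← le_div_iff₀' h4] at key
      rwa [div_eq_inv_mul] at key
    refine h5.trans (le_of_eq ?_)
    rw [Real.inv_rpow hn.le, inv_inv, Real.rpow_sub hn, Real.rpow_one]
    ring

/-- two-point power-mean inequality -/
lemma add_rpow_le {a b : ℝ} (ha : 0 ≤ a) (hb : 0 ≤ b) {p : ℝ} (hp : 1 ≤ p) :
    (a + b) ^ p ≤ 2 ^ (p - 1) * (a ^ p + b ^ p) := by
  have := sum_rpow_le (Finset.univ : Finset Bool) (fun c => cond c a b)
    (fun i _ => by cases i <;> simpa) hp
  simpa [Fintype.sum_bool] using this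

/-- Jensen: for a probability measure, `(∫ f)^p ≤ ∫ f^p` for nonneg `f`, `1 ≤ p`. -/
lemma integral_rpow_le {α : Type*} [MeasurableSpace α] (ν : Measure α) [IsProbabilityMeasure ν]
    {p : ℝ} {f : α → ℝ} (hf0 : ∀ x, 0 ≤ f x) (hfi : Integrable f ν)
    (hfpi : Integrable (fun x => f x ^ p) ν) (hp : 1 ≤ p) :
    (∫ x, f x ∂ν) ^ p ≤ ∫ x, f x ^ p ∂ν := by
  have hp0 : (0:ℝ) ≤ p := le_trans zero_le_one hp
  have hcont : ContinuousOn (fun x : ℝ => x ^ p) (Set.Ici 0) :=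
    Continuous.continuousOn (continuous_iff_continuousAt.2 fun x =>
      Real.continuousAt_rpow_const x p (Or.inr hp0))
  haveI : NeZero ν := ⟨IsProbabilityMeasure.ne_zero ν⟩
  have key := (convexOn_rpow hp).map_average_le hcont isClosed_Ici
    (Filter.Eventually.of_forall fun x => hf0 x) hfi hfpi
  rwa [average_eq_integral, average_eq_integral] at key

/-- evaluation is measure preserving on products of probability measures -/
lemma measurePreserving_eval_pi {ι : Type*} [Fintype ι] [DecidableEq ι] {α : ι → Type*}
    [∀ i, MeasurableSpace (α i)] (μs : ∀ i, Measure (α i)) [∀ i, IsProbabilityMeasure (μs i)]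
    (i : ι) : MeasurePreserving (Function.eval i) (Measure.pi μs) (μs i) := by
  refine ⟨measurable_pi_apply i, ?_⟩
  ext s hs
  rw [Measure.map_apply (measurable_pi_apply i) hs, Set.eval_preimage, Measure.pi_pi]
  rw [Finset.prod_eq_single i (fun j _ hj => by
    rw [Function.update_of_ne hj]; exact measure_univ) (by simp)]
  rw [Function.update_self]

lemma measurePreserving_fst_prob {α β : Type*} [MeasurableSpace α] [MeasurableSpace β]
    (μ : Measure α) (ν : Measure β) [SFinite ν] [SFinite μ] [IsProbabilityMeasure ν] :
    MeasurePreserving Prod.fst (μ.prod ν) μ :=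
  ⟨measurable_fst, by rw [Measure.map_fst_prod]; simp⟩

lemma measurePreserving_snd_prob {α β : Type*} [MeasurableSpace α] [MeasurableSpace β]
    (μ : Measure α) (ν : Measure β) [SFinite ν] [SFinite μ] [IsProbabilityMeasure μ] :
    MeasurePreserving Prod.snd (μ.prod ν) ν :=
  ⟨measurable_snd, by rw [Measure.map_snd_prod]; simp⟩

/-- transfer of integrals along a measure preserving map -/
lemma mp_integral_comp {α β : Type*} [MeasurableSpace α] [MeasurableSpace β]
    {μa : Measure α} {μb : Measure β} {f : α → β} (hf : MeasurePreserving f μa μb)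
    {g : β → ℝ} (hg : Measurable g) : ∫ x, g (f x) ∂μa = ∫ y, g y ∂μb := by
  calc ∫ x, g (f x) ∂μa = ∫ y, g y ∂(Measure.map f μa) :=
        (integral_map hf.measurable.aemeasurable hg.aestronglyMeasurable).symm
    _ = ∫ y, g y ∂μb := by rw [hf.map_eq]

/-- transfer of integrability along a measure preserving map -/
lemma mp_integrable_comp {α β : Type*} [MeasurableSpace α] [MeasurableSpace β]
    {μa : Measure α} {μb : Measure β} {f : α → β} (hf : MeasurePreserving f μa μb)
    {g : β → ℝ} (hg : Measurable g) (hgi : Integrable g μb) :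
    Integrable (fun x => g (f x)) μa := by
  have := (hf.integrable_comp hg.aestronglyMeasurable).2 hgi
  exact this

/-- The numerical constant bound. -/
lemma const_bound {p : ℝ} (hp : 2 ≤ p) {M : ℕ} (hM : 0 < M) :
    (1/(M:ℝ))^p * (2 * Real.exp (p/2) * p ^ (p/2) * ((M:ℝ)^(p/2 - 1) * ((M:ℝ) * (2^(p-1) * 2))))
      ≤ (16 * Real.sqrt p / Real.sqrt M) ^ p := by
  have hp0 : (0:ℝ) < p := lt_of_lt_of_le two_pos hp
  have hp1 : (1:ℝ) ≤ p := le_trans one_le_two hp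
  have hMR : (0:ℝ) < M := by exact_mod_cast hM
  have hMp : (0:ℝ) < (M:ℝ)^(p/2) := Real.rpow_pos_of_pos hMR _
  have h2a : (2:ℝ)^(p-1) * 2 = 2^p := by
    rw [Real.rpow_sub two_pos, Real.rpow_one, div_mul_cancel₀]
    norm_num
  have hMb : (M:ℝ)^(p/2-1) = (M:ℝ)^(p/2) * (M:ℝ)⁻¹ := by
    rw [Real.rpow_sub hMR, Real.rpow_one, div_eq_mul_inv]
  have hMc : (1/(M:ℝ))^p = ((M:ℝ)^(p/2) * (M:ℝ)^(p/2))⁻¹ := by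
    rw [← Real.rpow_add hMR, show (p/2 + p/2 : ℝ) = p by ring, one_div,
      Real.inv_rpow hMR.le]
  have hRHS : (16 * Real.sqrt p / Real.sqrt M) ^ p
      = 16^p * p^(p/2) / (M:ℝ)^(p/2) := by
    rw [Real.div_rpow (by positivity) (Real.sqrt_nonneg _),
      Real.mul_rpow (by norm_num) (Real.sqrt_nonneg _)]
    congr 1
    · congr 1
      rw [Real.sqrt_eq_rpow, ← Real.rpow_mul hp0.le, show (1/2*p : ℝ) = p/2 by ring]
    · rw [Real.sqrt_eq_rpow, ← Real.rpow_mul (Nat.cast_nonneg M),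
        show (1/2*p : ℝ) = p/2 by ring]
  have key : 2 * Real.exp (p/2) * 2^p ≤ 16^p := by
    have h1 : Real.exp (p/2) ≤ 2^p := by
      have e4 : Real.exp 1 ≤ 4 := le_of_lt (lt_trans Real.exp_one_lt_d9 (by norm_num))
      have : Real.exp (p/2) = Real.exp 1 ^ (p/2) := (Real.exp_one_rpow _).symm
      rw [this]
      have h4 : (4:ℝ)^(p/2) = 2^p := by
        have h44 : (4:ℝ) = (2:ℝ)^(2:ℕ) := by norm_num
        rw [h44, ← Real.rpow_natCast (2:ℝ) 2, ← Real.rpow_mul (by norm_num : (0:ℝ) ≤ 2)]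
        congr 1
        push_cast
        ring
      calc Real.exp 1 ^ (p/2) ≤ (4:ℝ) ^ (p/2) :=
            Real.rpow_le_rpow (Real.exp_pos 1).le e4 (by positivity)
        _ = 2^p := h4
    have h2 : (2:ℝ) ≤ 2^p := by
      calc (2:ℝ) = 2^(1:ℝ) := (Real.rpow_one 2).symm
        _ ≤ 2^p := Real.rpow_le_rpow_of_exponent_le one_le_two hp1
    have h3 : (0:ℝ) ≤ 2^p := Real.rpow_nonneg (by norm_num) p
    calc 2 * Real.exp (p/2) * 2^p ≤ 2^p * 2^p * 2^p := by
          refine mul_le_mul (mul_le_mul h2 h1 (Real.exp_pos _).le h3) le_rfl h3 ?_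
          positivity
      _ = (8:ℝ)^p := by
          rw [← Real.mul_rpow (by norm_num) (by norm_num),
            ← Real.mul_rpow (by positivity) (by norm_num)]
          norm_num
      _ ≤ 16^p := Real.rpow_le_rpow (by norm_num) (by norm_num) hp0.le
  calc (1/(M:ℝ))^p * (2 * Real.exp (p/2) * p ^ (p/2)
        * ((M:ℝ)^(p/2 - 1) * ((M:ℝ) * (2^(p-1) * 2))))
      = (2 * Real.exp (p/2) * 2^p) * (p^(p/2) * ((M:ℝ)^(p/2))⁻¹) := by
        rw [hMc, hMb, h2a]
        field_simp
    _ ≤ 16^p * (p^(p/2) * ((M:ℝ)^(p/2))⁻¹) := by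
        refine mul_le_mul_of_nonneg_right key ?_
        positivity
    _ = (16 * Real.sqrt p / Real.sqrt M) ^ p := by
        rw [hRHS]
        ring

/-! ### The single-function bound -/

set_option maxHeartbeats 1000000 in
lemma scalar_bound
    (𝒳 : Type) [MeasurableSpace 𝒳] (μ : Measure 𝒳) [IsProbabilityMeasure μ]
    {p : ℝ} (hp : 2 ≤ p) (M : ℕ) (hM : 0 < M)
    (ψ : 𝒳 → ℝ) (hψm : Measurable ψ) (hψ0 : ∀ x, 0 ≤ ψ x)
    (hψint : Integrable (fun x => ψ x ^ (2 * p)) μ)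
    (g : 𝒳 → ℝ) (hgm : Measurable g) (hg : ∀ x, |g x| ≤ ψ x ^ 2) :
    ∫ ω : Fin M → 𝒳, |(1 / (M:ℝ)) * ∑ i : Fin M, g (ω i) - ∫ x, g x ∂μ| ^ p
        ∂(Measure.pi fun _ : Fin M => μ)
      ≤ (16 * Real.sqrt p / Real.sqrt M) ^ p * ∫ x, ψ x ^ (2 * p) ∂μ := by
  have hp1 : (1:ℝ) ≤ p := le_trans one_le_two hp
  have hp0 : (0:ℝ) < p := lt_of_lt_of_le two_pos hp
  have hp2 : (1:ℝ) ≤ p/2 := by linarith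
  have hMR : (0:ℝ) < M := by exact_mod_cast hM
  -- the dominating function φ = ψ²
  set φ : 𝒳 → ℝ := fun x => ψ x ^ 2 with hφdef
  have hφm : Measurable φ := hψm.pow_const 2
  have hφ0 : ∀ x, 0 ≤ φ x := fun x => sq_nonneg _
  have hψeq : ∀ x, ψ x ^ (2*p) = φ x ^ p := by
    intro x
    rw [hφdef, show (2*p : ℝ) = ((2:ℕ):ℝ) * p by norm_num, Real.rpow_natCast_mul (hψ0 x)]
  have hφint : Integrable (fun x => φ x ^ p) μ := by
    have : (fun x => ψ x ^ (2*p)) = fun x => φ x ^ p := funext hψeq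
    rwa [this] at hψint
  set A : ℝ := ∫ x, ψ x ^ (2*p) ∂μ with hAdef
  have hAeq : A = ∫ x, φ x ^ p ∂μ := by
    rw [hAdef]; exact integral_congr_ae (Filter.Eventually.of_forall hψeq)
  have hA0 : 0 ≤ A := by
    rw [hAeq]; exact integral_nonneg fun x => Real.rpow_nonneg (hφ0 x) p
  -- continuity of rpow
  have hrc : Continuous (fun x : ℝ => x ^ p) :=
    continuous_iff_continuousAt.2 fun x => Real.continuousAt_rpow_const x p (Or.inr hp0.le)
  -- integrability of φ
  have hφint1 : Integrable φ μ := by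
    refine Integrable.mono (hφint.add (integrable_const 1)) hφm.aestronglyMeasurable ?_
    refine Filter.Eventually.of_forall fun x => ?_
    rw [Real.norm_eq_abs, abs_of_nonneg (hφ0 x)]
    have h1 : φ x ≤ φ x ^ p + 1 := by
      rcases le_or_gt (φ x) 1 with h | h
      · have := Real.rpow_nonneg (hφ0 x) p; linarith
      · have h2 := Real.rpow_le_rpow_of_exponent_le h.le hp1
        rw [Real.rpow_one] at h2; linarith
    calc φ x ≤ φ x ^ p + 1 := h1
      _ ≤ ‖φ x ^ p + 1‖ := le_abs_self _
  have hgint : Integrable g μ := by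
    refine hφint1.mono hgm.aestronglyMeasurable (Filter.Eventually.of_forall fun x => ?_)
    rw [Real.norm_eq_abs, Real.norm_eq_abs, abs_of_nonneg (hφ0 x)]
    exact hg x
  set c : ℝ := ∫ x, g x ∂μ with hcdef
  -- measures
  set P : Measure (Fin M → 𝒳) := Measure.pi (fun _ : Fin M => μ) with hPdef
  haveI hPprob : IsProbabilityMeasure P := by rw [hPdef]; infer_instance
  set ρ : Measure (𝒳 × 𝒳) := μ.prod μ with hρdef
  haveI hρprob : IsProbabilityMeasure ρ := by rw [hρdef]; infer_instance
  set Q : Measure (Fin M → 𝒳 × 𝒳) := Measure.pi (fun _ : Fin M => ρ) with hQdef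
  haveI hQprob : IsProbabilityMeasure Q := by rw [hQdef]; infer_instance
  have mp_evP : ∀ i : Fin M, MeasurePreserving (Function.eval i) P μ := by
    intro i; rw [hPdef]; exact measurePreserving_eval_pi (fun _ : Fin M => μ) i
  have mp_evQ : ∀ i : Fin M, MeasurePreserving (Function.eval i) Q ρ := by
    intro i; rw [hQdef]; exact measurePreserving_eval_pi (fun _ : Fin M => ρ) i
  have mp_fst : MeasurePreserving Prod.fst ρ μ := by
    rw [hρdef]; exact measurePreserving_fst_prob μ μ
  have mp_snd : MeasurePreserving Prod.snd ρ μ := by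
    rw [hρdef]; exact measurePreserving_snd_prob μ μ
  -- the symmetrized function
  set h : 𝒳 × 𝒳 → ℝ := fun z => g z.1 - g z.2 with hhdef
  have hhm : Measurable h := (hgm.comp measurable_fst).sub (hgm.comp measurable_snd)
  have hhb : ∀ z, |h z| ≤ φ z.1 + φ z.2 := fun z =>
    (abs_sub _ _).trans (add_le_add (hg _) (hg _))
  have hhp_meas : Measurable (fun z : 𝒳 × 𝒳 => |h z| ^ p) :=
    hrc.measurable.comp hhm.abs
  -- |h|^p ρ-integrable with integral ≤ 2^(p-1) * (A + A)
  have hfst : Integrable (fun z : 𝒳 × 𝒳 => φ z.1 ^ p) ρ :=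
    mp_integrable_comp mp_fst (hrc.measurable.comp hφm) hφint
  have hsnd : Integrable (fun z : 𝒳 × 𝒳 => φ z.2 ^ p) ρ :=
    mp_integrable_comp mp_snd (hrc.measurable.comp hφm) hφint
  have hhple : ∀ z : 𝒳 × 𝒳, |h z| ^ p ≤ 2^(p-1) * (φ z.1 ^ p + φ z.2 ^ p) := by
    intro z
    calc |h z| ^ p ≤ (φ z.1 + φ z.2) ^ p :=
          Real.rpow_le_rpow (abs_nonneg _) (hhb z) hp0.le
      _ ≤ 2^(p-1) * (φ z.1 ^ p + φ z.2 ^ p) := add_rpow_le (hφ0 _) (hφ0 _) hp1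
  have hint_hp : Integrable (fun z => |h z| ^ p) ρ := by
    refine Integrable.mono ((hfst.add hsnd).const_mul (2^(p-1)))
      hhp_meas.aestronglyMeasurable (Filter.Eventually.of_forall fun z => ?_)
    rw [Real.norm_eq_abs, Real.norm_eq_abs, abs_of_nonneg (Real.rpow_nonneg (abs_nonneg _) p)]
    exact (hhple z).trans (le_abs_self _)
  have hAρ : ∫ z, |h z| ^ p ∂ρ ≤ 2^(p-1) * (A + A) := by
    have hb : ∫ z : 𝒳 × 𝒳, 2^(p-1) * (φ z.1 ^ p + φ z.2 ^ p) ∂ρ = 2^(p-1) * (A + A) := by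
      rw [integral_const_mul, integral_add hfst hsnd]
      congr 1
      rw [hAeq]
      congr 1
      · exact mp_integral_comp mp_fst (hrc.measurable.comp hφm)
      · exact mp_integral_comp mp_snd (hrc.measurable.comp hφm)
    rw [← hb]
    refine integral_mono_of_nonneg (Filter.Eventually.of_forall fun z => ?_)
      ((hfst.add hsnd).const_mul _) (Filter.Eventually.of_forall fun z => hhple z)
    exact Real.rpow_nonneg (abs_nonneg _) p
  -- integrability over Q of signed sums
  have hQcoord : ∀ i : Fin M, Integrable (fun z : Fin M → 𝒳 × 𝒳 => |h (z i)| ^ p) Q :=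
    fun i => mp_integrable_comp (mp_evQ i) hhp_meas hint_hp
  have hQsum : Integrable (fun z : Fin M → 𝒳 × 𝒳 => ∑ i, |h (z i)| ^ p) Q :=
    integrable_finset_sum _ (fun i _ => hQcoord i)
  have habs_sum : ∀ (w : Fin M → ℝ), (∀ i, |w i| ≤ 1) → ∀ z : Fin M → 𝒳 × 𝒳,
      |∑ i, w i * h (z i)| ^ p ≤ (M:ℝ)^(p-1) * ∑ i, |h (z i)| ^ p := by
    intro w hw z
    have h1 : |∑ i, w i * h (z i)| ≤ ∑ i, |h (z i)| := by
      calc |∑ i, w i * h (z i)| ≤ ∑ i, |w i * h (z i)| := Finset.abs_sum_le_sum_abs _ _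
        _ ≤ ∑ i, |h (z i)| := by
            refine Finset.sum_le_sum fun i _ => ?_
            rw [abs_mul]
            calc |w i| * |h (z i)| ≤ 1 * |h (z i)| :=
                  mul_le_mul_of_nonneg_right (hw i) (abs_nonneg _)
              _ = |h (z i)| := one_mul _
    calc |∑ i, w i * h (z i)| ^ p ≤ (∑ i, |h (z i)|) ^ p :=
          Real.rpow_le_rpow (abs_nonneg _) h1 hp0.le
      _ ≤ (M:ℝ)^(p-1) * ∑ i, |h (z i)| ^ p := by
          have := sum_rpow_le (Finset.univ : Finset (Fin M)) (fun i => |h (z i)|)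
            (fun i _ => abs_nonneg _) hp1
          simpa using this
  have hQsigned : ∀ (w : Fin M → ℝ), (∀ i, |w i| ≤ 1) →
      Integrable (fun z : Fin M → 𝒳 × 𝒳 => |∑ i, w i * h (z i)| ^ p) Q := by
    intro w hw
    have hmeas : Measurable (fun z : Fin M → 𝒳 × 𝒳 => |∑ i, w i * h (z i)| ^ p) := by
      refine hrc.measurable.comp (Measurable.abs ?_)
      exact Finset.measurable_sum _ fun i _ =>
        (hhm.comp (measurable_pi_apply i)).const_mul (w i)
    refine Integrable.mono (hQsum.const_mul ((M:ℝ)^(p-1)))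
      hmeas.aestronglyMeasurable (Filter.Eventually.of_forall fun z => ?_)
    rw [Real.norm_eq_abs, Real.norm_eq_abs, abs_of_nonneg (Real.rpow_nonneg (abs_nonneg _) p)]
    exact (habs_sum w hw z).trans (le_abs_self _)
  have hQint1 : Integrable (fun z : Fin M → 𝒳 × 𝒳 => |∑ i, h (z i)| ^ p) Q := by
    have := hQsigned (fun _ => 1) (fun i => by norm_num)
    simpa using this
  -- the squared-sum function on the product space
  set FF : (Fin M → 𝒳) × (Fin M → 𝒳) → ℝ :=
    fun q => |∑ i, (g (q.1 i) - g (q.2 i))| ^ p with hFFdef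
  have hFFmeas : Measurable FF := by
    refine hrc.measurable.comp (Measurable.abs ?_)
    exact Finset.measurable_sum _ fun i _ =>
      ((hgm.comp ((measurable_pi_apply i).comp measurable_fst)).sub
        (hgm.comp ((measurable_pi_apply i).comp measurable_snd)))
  -- the identification Q ≃ P ⊗ P
  have mp_e : MeasurePreserving (MeasurableEquiv.arrowProdEquivProdArrow 𝒳 𝒳 (Fin M))
      Q (P.prod P) := by
    rw [hQdef, hPdef, hρdef]
    exact measurePreserving_arrowProdEquivProdArrow 𝒳 𝒳 (Fin M)
      (fun _ => μ) (fun _ => μ)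
  have hFFe : ∀ z : Fin M → 𝒳 × 𝒳,
      FF (MeasurableEquiv.arrowProdEquivProdArrow 𝒳 𝒳 (Fin M) z) = |∑ i, h (z i)| ^ p := by
    intro z
    rfl
  have hFFint : Integrable FF (P.prod P) := by
    rw [← mp_e.map_eq]
    refine (integrable_map_measure hFFmeas.aestronglyMeasurable
      mp_e.measurable.aemeasurable).2 ?_
    have : FF ∘ (MeasurableEquiv.arrowProdEquivProdArrow 𝒳 𝒳 (Fin M))
        = fun z => |∑ i, h (z i)| ^ p := funext hFFe
    rw [this]
    exact hQint1
  have hPPQ : ∫ q, FF q ∂(P.prod P) = ∫ z, |∑ i, h (z i)| ^ p ∂Q := by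
    rw [← mp_e.map_eq, integral_map mp_e.measurable.aemeasurable hFFmeas.aestronglyMeasurable]
    exact integral_congr_ae (Filter.Eventually.of_forall hFFe)
  -- pointwise Jensen
  have hVint : Integrable (fun ω' : Fin M → 𝒳 => ∑ i, g (ω' i)) P :=
    integrable_finset_sum _ (fun i _ => mp_integrable_comp (mp_evP i) hgm hgint)
  have hevalint : ∀ i : Fin M, ∫ ω' : Fin M → 𝒳, g (ω' i) ∂P = c :=
    fun i => mp_integral_comp (mp_evP i) hgm
  have jensen : ∀ ω : Fin M → 𝒳,
      |∑ i, g (ω i) - (M:ℝ) * c| ^ p ≤ ∫ ω', FF (ω, ω') ∂P := by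
    intro ω
    set W : (Fin M → 𝒳) → ℝ := fun ω' => ∑ i, (g (ω i) - g (ω' i)) with hWdef
    have hWeq : ∀ ω', W ω' = (∑ i, g (ω i)) - ∑ i, g (ω' i) := by
      intro ω'; rw [hWdef]; exact Finset.sum_sub_distrib _ _
    have hWint : Integrable W P := by
      have : W = fun ω' => (∑ i, g (ω i)) - ∑ i, g (ω' i) := funext hWeq
      rw [this]
      exact (integrable_const _).sub hVint
    have hWval : ∫ ω', W ω' ∂P = ∑ i, g (ω i) - (M:ℝ) * c := by
      have : ∫ ω', W ω' ∂P = ∫ ω', ((∑ i, g (ω i)) - ∑ i, g (ω' i)) ∂P :=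
        integral_congr_ae (Filter.Eventually.of_forall hWeq)
      rw [this, integral_sub (integrable_const _) hVint, integral_const]
      have h2 : ∫ ω' : Fin M → 𝒳, ∑ i, g (ω' i) ∂P = (M:ℝ) * c := by
        rw [integral_finset_sum _ (fun i _ => mp_integrable_comp (mp_evP i) hgm hgint)]
        rw [Finset.sum_congr rfl (fun i _ => hevalint i), Finset.sum_const]
        simp [nsmul_eq_mul]
      rw [h2]
      simp [measure_univ]
    have hWm : Measurable W := by
      rw [hWdef]
      exact Finset.measurable_sum _ fun i _ =>
        (measurable_const.sub (hgm.comp (measurable_pi_apply i)))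
    have hWabs_int : Integrable (fun ω' => |W ω'|) P := hWint.abs
    -- integrability of |W|^p
    have hsump : Integrable (fun ω' : Fin M → 𝒳 => ∑ i, φ (ω' i) ^ p) P :=
      integrable_finset_sum _ fun i _ =>
        mp_integrable_comp (mp_evP i) (hrc.measurable.comp hφm) hφint
    have hWple : ∀ ω', |W ω'| ^ p
        ≤ 2^(p-1) * ((∑ i, φ (ω i)) ^ p + (M:ℝ)^(p-1) * ∑ i, φ (ω' i) ^ p) := by
      intro ω'
      have h1 : |W ω'| ≤ (∑ i, φ (ω i)) + ∑ i, φ (ω' i) := by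
        rw [hWdef]
        calc |∑ i, (g (ω i) - g (ω' i))| ≤ ∑ i, |g (ω i) - g (ω' i)| :=
              Finset.abs_sum_le_sum_abs _ _
          _ ≤ ∑ i, (φ (ω i) + φ (ω' i)) := by
              refine Finset.sum_le_sum fun i _ => ?_
              exact (abs_sub _ _).trans (add_le_add (hg _) (hg _))
          _ = (∑ i, φ (ω i)) + ∑ i, φ (ω' i) := Finset.sum_add_distrib
      calc |W ω'| ^ p ≤ ((∑ i, φ (ω i)) + ∑ i, φ (ω' i)) ^ p :=
            Real.rpow_le_rpow (abs_nonneg _) h1 hp0.le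
        _ ≤ 2^(p-1) * ((∑ i, φ (ω i)) ^ p + (∑ i, φ (ω' i)) ^ p) :=
            add_rpow_le (Finset.sum_nonneg fun i _ => hφ0 _)
              (Finset.sum_nonneg fun i _ => hφ0 _) hp1
        _ ≤ 2^(p-1) * ((∑ i, φ (ω i)) ^ p + (M:ℝ)^(p-1) * ∑ i, φ (ω' i) ^ p) := by
            refine mul_le_mul_of_nonneg_left ?_ (by positivity)
            refine add_le_add le_rfl ?_
            have := sum_rpow_le (Finset.univ : Finset (Fin M)) (fun i => φ (ω' i))
              (fun i _ => hφ0 _) hp1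
            simpa using this
    have hWpint : Integrable (fun ω' => |W ω'| ^ p) P := by
      refine Integrable.mono (((integrable_const ((∑ i, φ (ω i)) ^ p)).add
        (hsump.const_mul ((M:ℝ)^(p-1)))).const_mul (2^(p-1)))
        (hrc.measurable.comp hWm.abs).aestronglyMeasurable
        (Filter.Eventually.of_forall fun ω' => ?_)
      rw [Real.norm_eq_abs, Real.norm_eq_abs,
        abs_of_nonneg (Real.rpow_nonneg (abs_nonneg _) p)]
      exact (hWple ω').trans (le_abs_self _)
    have habs : |∑ i, g (ω i) - (M:ℝ) * c| ≤ ∫ ω', |W ω'| ∂P := by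
      rw [← hWval]
      simpa [Real.norm_eq_abs] using norm_integral_le_integral_norm W (μ := P)
    calc |∑ i, g (ω i) - (M:ℝ) * c| ^ p ≤ (∫ ω', |W ω'| ∂P) ^ p :=
          Real.rpow_le_rpow (abs_nonneg _) habs hp0.le
      _ ≤ ∫ ω', |W ω'| ^ p ∂P :=
          integral_rpow_le P (fun ω' => abs_nonneg _) hWabs_int hWpint hp1
      _ = ∫ ω', FF (ω, ω') ∂P := rfl
  -- step: ∫_P |T|^p ≤ ∫_Q |∑ h|^p
  have hTmeas : Measurable (fun ω : Fin M → 𝒳 => |∑ i, g (ω i) - (M:ℝ) * c| ^ p) := by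
    refine hrc.measurable.comp (Measurable.abs ?_)
    exact (Finset.measurable_sum _ fun i _ => hgm.comp (measurable_pi_apply i)).sub
      measurable_const
  have step3 : ∫ ω, |∑ i, g (ω i) - (M:ℝ) * c| ^ p ∂P ≤ ∫ z, |∑ i, h (z i)| ^ p ∂Q := by
    have hiter : Integrable (fun ω => ∫ ω', FF (ω, ω') ∂P) P := hFFint.integral_prod_left
    calc ∫ ω, |∑ i, g (ω i) - (M:ℝ) * c| ^ p ∂P
        ≤ ∫ ω, (∫ ω', FF (ω, ω') ∂P) ∂P := by
          refine integral_mono_of_nonneg (Filter.Eventually.of_forall fun ω => ?_)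
            hiter (Filter.Eventually.of_forall jensen)
          exact Real.rpow_nonneg (abs_nonneg _) p
      _ = ∫ q, FF q ∂(P.prod P) := integral_integral hFFint
      _ = ∫ z, |∑ i, h (z i)| ^ p ∂Q := hPPQ
  -- sign flips
  have flip : ∀ s : Fin M → Bool, ∫ z, |∑ i, h (z i)| ^ p ∂Q
      = ∫ z, |∑ i, epsB (s i) * h (z i)| ^ p ∂Q := by
    intro s
    have mpT : MeasurePreserving
        (fun (z : Fin M → 𝒳 × 𝒳) (i : Fin M) => if s i then Prod.swap (z i) else z i) Q Q := by
      rw [hQdef]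
      refine measurePreserving_pi (fun _ : Fin M => ρ) (fun _ : Fin M => ρ)
        (f := fun (i : Fin M) (y : 𝒳 × 𝒳) => if s i then Prod.swap y else y) (fun i => ?_)
      cases hs : s i
      · convert MeasurePreserving.id ρ using 1; funext y; simp [hs]
      · simp only [hs, if_true]
        exact ⟨measurable_swap, Measure.prod_swap⟩
    have hmeas : Measurable (fun z : Fin M → 𝒳 × 𝒳 => |∑ i, h (z i)| ^ p) := by
      refine hrc.measurable.comp (Measurable.abs ?_)
      exact Finset.measurable_sum _ fun i _ => hhm.comp (measurable_pi_apply i)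
    have h1 : ∫ z, |∑ i, h (z i)| ^ p ∂Q
        = ∫ z, |∑ i, h (if s i then Prod.swap (z i) else z i)| ^ p ∂Q :=
      (mp_integral_comp mpT hmeas).symm
    have hz : ∀ z : Fin M → 𝒳 × 𝒳,
        ∑ i, h (if s i then Prod.swap (z i) else z i) = ∑ i, epsB (s i) * h (z i) := by
      intro z
      refine Finset.sum_congr rfl fun i _ => ?_
      cases hs : s i
      · simp [hs, epsB]
      · simp only [hs, if_true, epsB, hhdef]
        simp only [Prod.fst_swap, Prod.snd_swap]
        ring
    rw [h1]
    refine integral_congr_ae (Filter.Eventually.of_forall fun z => ?_)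
    simp only [hz z]
  -- averaging over signs and Khintchine
  set JQ : ℝ := ∫ z, |∑ i, h (z i)| ^ p ∂Q with hJQdef
  have hcard : (Finset.univ : Finset (Fin M → Bool)).card = 2^M := by
    simp [Fintype.card_fun]
  have havg : (2:ℝ)^M * JQ = ∫ z, ∑ s : Fin M → Bool, |∑ i, epsB (s i) * h (z i)| ^ p ∂Q := by
    rw [integral_finset_sum _ (fun s _ => hQsigned (fun i => epsB (s i))
      (fun i => le_of_eq (abs_epsB _)))]
    rw [Finset.sum_congr rfl (fun s _ => (flip s).symm), Finset.sum_const, hcard,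
      nsmul_eq_mul]
    push_cast
    ring
  have hptwise : ∀ z : Fin M → 𝒳 × 𝒳,
      ∑ s : Fin M → Bool, |∑ i, epsB (s i) * h (z i)| ^ p
        ≤ (2:ℝ)^M * (2 * Real.exp (p/2) * p^(p/2) * ((M:ℝ)^(p/2-1) * ∑ i, |h (z i)| ^ p)) := by
    intro z
    have hk := khintchine M (fun i => h (z i)) hp
    have hsq : ∀ x : ℝ, (x^2 : ℝ) ^ (p/2) = |x| ^ p := by
      intro x
      rw [← sq_abs, ← Real.rpow_natCast_mul (abs_nonneg x),
        show (((2:ℕ):ℝ) * (p/2) : ℝ) = p by push_cast; ring]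
    have h2 : (∑ i, (h (z i))^2 : ℝ) ^ (p/2) ≤ (M:ℝ)^(p/2-1) * ∑ i, |h (z i)| ^ p := by
      have := sum_rpow_le (Finset.univ : Finset (Fin M)) (fun i => (h (z i))^2)
        (fun i _ => sq_nonneg _) hp2
      simp only [Finset.card_univ, Fintype.card_fin] at this
      calc (∑ i, (h (z i))^2 : ℝ) ^ (p/2)
          ≤ (M:ℝ)^(p/2-1) * ∑ i, ((h (z i))^2) ^ (p/2) := this
        _ = (M:ℝ)^(p/2-1) * ∑ i, |h (z i)| ^ p := by
            congr 1
            exact Finset.sum_congr rfl fun i _ => hsq _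
    calc ∑ s : Fin M → Bool, |∑ i, epsB (s i) * h (z i)| ^ p
        ≤ 2^M * (2 * Real.exp (p/2) * p^(p/2) * (∑ i, (h (z i))^2) ^ (p/2)) := hk
      _ ≤ (2:ℝ)^M * (2 * Real.exp (p/2) * p^(p/2) * ((M:ℝ)^(p/2-1) * ∑ i, |h (z i)| ^ p)) := by
          refine mul_le_mul_of_nonneg_left ?_ (by positivity)
          refine mul_le_mul_of_nonneg_left h2 ?_
          positivity
  have hJQ : JQ ≤ 2 * Real.exp (p/2) * p^(p/2) * ((M:ℝ)^(p/2-1) * ((M:ℝ) * (2^(p-1) * (A + A)))) := by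
    have hsumQ : ∫ z, ∑ i, |h (z i)| ^ p ∂Q = (M:ℝ) * ∫ z', |h z'| ^ p ∂ρ := by
      rw [integral_finset_sum _ (fun i _ => hQcoord i)]
      rw [Finset.sum_congr rfl (fun i _ => mp_integral_comp (mp_evQ i) hhp_meas),
        Finset.sum_const]
      simp [nsmul_eq_mul]
    have hbound : (2:ℝ)^M * JQ
        ≤ (2:ℝ)^M * (2 * Real.exp (p/2) * p^(p/2) * ((M:ℝ)^(p/2-1)
            * ∫ z, ∑ i, |h (z i)| ^ p ∂Q)) := by
      rw [havg]
      have hrhs : Integrable (fun z : Fin M → 𝒳 × 𝒳 =>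
          (2:ℝ)^M * (2 * Real.exp (p/2) * p^(p/2) * ((M:ℝ)^(p/2-1) * ∑ i, |h (z i)| ^ p))) Q := by
        exact ((hQsum.const_mul _).const_mul _).const_mul _
      calc ∫ z, ∑ s : Fin M → Bool, |∑ i, epsB (s i) * h (z i)| ^ p ∂Q
          ≤ ∫ z, (2:ℝ)^M * (2 * Real.exp (p/2) * p^(p/2)
              * ((M:ℝ)^(p/2-1) * ∑ i, |h (z i)| ^ p)) ∂Q := by
            refine integral_mono_of_nonneg (Filter.Eventually.of_forall fun z => ?_)
              hrhs (Filter.Eventually.of_forall hptwise)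
            exact Finset.sum_nonneg fun s _ => Real.rpow_nonneg (abs_nonneg _) p
        _ = (2:ℝ)^M * (2 * Real.exp (p/2) * p^(p/2) * ((M:ℝ)^(p/2-1)
              * ∫ z, ∑ i, |h (z i)| ^ p ∂Q)) := by
            rw [integral_const_mul, integral_const_mul, integral_const_mul]
    have h2M : (0:ℝ) < (2:ℝ)^M := by positivity
    have := le_of_mul_le_mul_left hbound h2M
    rw [hsumQ] at this
    calc JQ ≤ 2 * Real.exp (p/2) * p^(p/2) * ((M:ℝ)^(p/2-1) * ((M:ℝ) * ∫ z', |h z'| ^ p ∂ρ)) :=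
          this
      _ ≤ 2 * Real.exp (p/2) * p^(p/2) * ((M:ℝ)^(p/2-1) * ((M:ℝ) * (2^(p-1) * (A + A)))) := by
          refine mul_le_mul_of_nonneg_left ?_ (by positivity)
          refine mul_le_mul_of_nonneg_left ?_ (by positivity)
          exact mul_le_mul_of_nonneg_left hAρ (Nat.cast_nonneg M)
  -- put everything together
  have hDT : ∀ ω : Fin M → 𝒳, |(1 / (M:ℝ)) * ∑ i, g (ω i) - c| ^ p
      = (1/(M:ℝ))^p * |∑ i, g (ω i) - (M:ℝ) * c| ^ p := by
    intro ω
    have h1 : (1 / (M:ℝ)) * ∑ i, g (ω i) - c = (1/(M:ℝ)) * (∑ i, g (ω i) - (M:ℝ) * c) := by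
      field_simp
    rw [h1, abs_mul, Real.mul_rpow (abs_nonneg _) (abs_nonneg _),
      abs_of_pos (by positivity : (0:ℝ) < 1/(M:ℝ))]
  have hfinal : ∫ ω, |(1 / (M:ℝ)) * ∑ i, g (ω i) - c| ^ p ∂P
      ≤ (1/(M:ℝ))^p * (2 * Real.exp (p/2) * p^(p/2)
          * ((M:ℝ)^(p/2-1) * ((M:ℝ) * (2^(p-1) * (A + A))))) := by
    have he : ∫ ω, |(1 / (M:ℝ)) * ∑ i, g (ω i) - c| ^ p ∂P
        = (1/(M:ℝ))^p * ∫ ω, |∑ i, g (ω i) - (M:ℝ) * c| ^ p ∂P := by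
      rw [← integral_const_mul]
      exact integral_congr_ae (Filter.Eventually.of_forall hDT)
    rw [he]
    refine mul_le_mul_of_nonneg_left ?_ (by positivity)
    exact le_trans step3 hJQ
  -- conclude with the numeric bound
  have hAA : A + A = 2 * A := by ring
  calc ∫ ω, |(1 / (M:ℝ)) * ∑ i, g (ω i) - c| ^ p ∂P
      ≤ (1/(M:ℝ))^p * (2 * Real.exp (p/2) * p^(p/2)
          * ((M:ℝ)^(p/2-1) * ((M:ℝ) * (2^(p-1) * (A + A))))) := hfinal
    _ = ((1/(M:ℝ))^p * (2 * Real.exp (p/2) * p ^ (p/2)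
          * ((M:ℝ)^(p/2 - 1) * ((M:ℝ) * (2^(p-1) * 2))))) * A := by
        rw [hAA]; ring
    _ ≤ (16 * Real.sqrt p / Real.sqrt M) ^ p * A :=
        mul_le_mul_of_nonneg_right (const_bound hp hM) hA0

end MaximalIneqAux

open MaximalIneqAux in
/-- maximal inequality used in the generalization analysis, after
Lanthaler–Mishra–Karniadakis.  For i.i.d. samples `X₁,…,X_M ~ μ` and finitely many
functions `g₁,…,g_K` dominated by `ψ²`, the `L^p` norm of the maximal deviation of the
empirical means from the true means is at most `16 K^{1/p} √p ‖ψ‖²_{L^{2p}} / √M`. -/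
theorem maximal_inequality_empirical_means
    (𝒳 : Type) [MeasurableSpace 𝒳] (μ : Measure 𝒳) [IsProbabilityMeasure μ]
    (p : ℝ) (hp : 2 ≤ p) (M K : ℕ) (hM : 0 < M) (hK : 0 < K)
    (ψ : 𝒳 → ℝ) (hψm : Measurable ψ) (hψ0 : ∀ x, 0 ≤ ψ x)
    (hψint : Integrable (fun x => ψ x ^ (2 * p)) μ)
    (g : Fin K → 𝒳 → ℝ) (hgm : ∀ j, Measurable (g j))
    (hg : ∀ j x, |g j x| ≤ ψ x ^ 2) :
    (∫ ω : Fin M → 𝒳,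
        (⨆ j : Fin K, |(1 / (M : ℝ)) * ∑ i : Fin M, g j (ω i) - ∫ x, g j x ∂μ| ^ p)
      ∂(Measure.pi fun _ : Fin M => μ)) ^ ((1 : ℝ) / p) ≤
      16 * (K : ℝ) ^ ((1 : ℝ) / p) * Real.sqrt p *
        (∫ x, ψ x ^ (2 * p) ∂μ) ^ ((1 : ℝ) / p) / Real.sqrt M := by
  have hp1 : (1:ℝ) ≤ p := le_trans one_le_two hp
  have hp0 : (0:ℝ) < p := lt_of_lt_of_le two_pos hp
  have hMR : (0:ℝ) < M := by exact_mod_cast hM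
  haveI hKne : Nonempty (Fin K) := ⟨⟨0, hK⟩⟩
  set P : Measure (Fin M → 𝒳) := Measure.pi (fun _ : Fin M => μ) with hPdef
  haveI hPprob : IsProbabilityMeasure P := by rw [hPdef]; infer_instance
  set A : ℝ := ∫ x, ψ x ^ (2*p) ∂μ with hAdef
  -- φ and its integrability facts (replicated from scalar_bound)
  set φ : 𝒳 → ℝ := fun x => ψ x ^ 2 with hφdef
  have hφm : Measurable φ := hψm.pow_const 2
  have hφ0 : ∀ x, 0 ≤ φ x := fun x => sq_nonneg _
  have hψeq : ∀ x, ψ x ^ (2*p) = φ x ^ p := by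
    intro x
    rw [hφdef, show (2*p : ℝ) = ((2:ℕ):ℝ) * p by norm_num, Real.rpow_natCast_mul (hψ0 x)]
  have hφint : Integrable (fun x => φ x ^ p) μ := by
    have : (fun x => ψ x ^ (2*p)) = fun x => φ x ^ p := funext hψeq
    rwa [this] at hψint
  have hA0 : 0 ≤ A := by
    rw [hAdef]
    exact integral_nonneg fun x => Real.rpow_nonneg (by
      have := hψ0 x; positivity) _
  have hrc : Continuous (fun x : ℝ => x ^ p) :=
    continuous_iff_continuousAt.2 fun x => Real.continuousAt_rpow_const x p (Or.inr hp0.le)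
  have mp_evP : ∀ i : Fin M, MeasurePreserving (Function.eval i) P μ := by
    intro i; rw [hPdef]; exact measurePreserving_eval_pi (fun _ : Fin M => μ) i
  have hφint1 : Integrable φ μ := by
    refine Integrable.mono (hφint.add (integrable_const 1)) hφm.aestronglyMeasurable ?_
    refine Filter.Eventually.of_forall fun x => ?_
    rw [Real.norm_eq_abs, abs_of_nonneg (hφ0 x)]
    have h1 : φ x ≤ φ x ^ p + 1 := by
      rcases le_or_gt (φ x) 1 with h | h
      · have := Real.rpow_nonneg (hφ0 x) p; linarith
      · have h2 := Real.rpow_le_rpow_of_exponent_le h.le hp1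
        rw [Real.rpow_one] at h2; linarith
    calc φ x ≤ φ x ^ p + 1 := h1
      _ ≤ ‖φ x ^ p + 1‖ := le_abs_self _
  have hgint : ∀ j, Integrable (g j) μ := by
    intro j
    refine hφint1.mono (hgm j).aestronglyMeasurable (Filter.Eventually.of_forall fun x => ?_)
    rw [Real.norm_eq_abs, Real.norm_eq_abs, abs_of_nonneg (hφ0 x)]
    exact hg j x
  have hsump : Integrable (fun ω : Fin M → 𝒳 => ∑ i, φ (ω i) ^ p) P :=
    integrable_finset_sum _ fun i _ =>
      mp_integrable_comp (mp_evP i) (hrc.measurable.comp hφm) hφint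
  -- the deviation functions and their integrability
  set D : Fin K → (Fin M → 𝒳) → ℝ :=
    fun j ω => |(1 / (M:ℝ)) * ∑ i, g j (ω i) - ∫ x, g j x ∂μ| ^ p with hDdef
  have hD0 : ∀ j ω, 0 ≤ D j ω := fun j ω => Real.rpow_nonneg (abs_nonneg _) p
  have hDint : ∀ j, Integrable (D j) P := by
    intro j
    set cj : ℝ := ∫ x, g j x ∂μ with hcjdef
    have hDmeas : Measurable (D j) := by
      refine hrc.measurable.comp (Measurable.abs ?_)
      exact ((Finset.measurable_sum _ fun i _ =>
        (hgm j).comp (measurable_pi_apply i)).const_mul _).sub measurable_const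
    have hble : ∀ ω : Fin M → 𝒳, D j ω
        ≤ 2^(p-1) * ((M:ℝ)^(p-1) * ∑ i, φ (ω i) ^ p + |cj| ^ p) := by
      intro ω
      have h1 : |(1 / (M:ℝ)) * ∑ i, g j (ω i) - cj| ≤ (∑ i, φ (ω i)) + |cj| := by
        calc |(1 / (M:ℝ)) * ∑ i, g j (ω i) - cj|
            ≤ |(1 / (M:ℝ)) * ∑ i, g j (ω i)| + |cj| := abs_sub _ _
          _ ≤ (∑ i, φ (ω i)) + |cj| := by
              refine add_le_add ?_ le_rfl
              rw [abs_mul, abs_of_pos (by positivity : (0:ℝ) < 1/(M:ℝ))]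
              calc (1/(M:ℝ)) * |∑ i, g j (ω i)| ≤ 1 * |∑ i, g j (ω i)| := by
                    refine mul_le_mul_of_nonneg_right ?_ (abs_nonneg _)
                    rw [div_le_one hMR]
                    exact_mod_cast hM
                _ = |∑ i, g j (ω i)| := one_mul _
                _ ≤ ∑ i, |g j (ω i)| := Finset.abs_sum_le_sum_abs _ _
                _ ≤ ∑ i, φ (ω i) := Finset.sum_le_sum fun i _ => hg j _
      calc D j ω ≤ ((∑ i, φ (ω i)) + |cj|) ^ p :=
            Real.rpow_le_rpow (abs_nonneg _) h1 hp0.le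
        _ ≤ 2^(p-1) * ((∑ i, φ (ω i)) ^ p + |cj| ^ p) :=
            add_rpow_le (Finset.sum_nonneg fun i _ => hφ0 _) (abs_nonneg _) hp1
        _ ≤ 2^(p-1) * ((M:ℝ)^(p-1) * ∑ i, φ (ω i) ^ p + |cj| ^ p) := by
            refine mul_le_mul_of_nonneg_left (add_le_add ?_ le_rfl) (by positivity)
            have := sum_rpow_le (Finset.univ : Finset (Fin M)) (fun i => φ (ω i))
              (fun i _ => hφ0 _) hp1
            simpa using this
    refine Integrable.mono (((hsump.const_mul ((M:ℝ)^(p-1))).add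
      (integrable_const (|cj| ^ p))).const_mul (2^(p-1)))
      hDmeas.aestronglyMeasurable (Filter.Eventually.of_forall fun ω => ?_)
    rw [Real.norm_eq_abs, Real.norm_eq_abs, abs_of_nonneg (hD0 j ω)]
    exact (hble ω).trans (le_abs_self _)
  have hDsumint : Integrable (fun ω => ∑ j : Fin K, D j ω) P :=
    integrable_finset_sum _ fun j _ => hDint j
  -- bound the integral of the supremum
  have hsup_nonneg : ∀ ω : Fin M → 𝒳, 0 ≤ ⨆ j : Fin K, D j ω := by
    intro ω
    have := le_ciSup (Set.Finite.bddAbove (Set.finite_range fun j => D j ω))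
      (Classical.arbitrary (Fin K))
    exact le_trans (hD0 _ ω) this
  have hsup_le_sum : ∀ ω : Fin M → 𝒳, (⨆ j : Fin K, D j ω) ≤ ∑ j : Fin K, D j ω := by
    intro ω
    refine ciSup_le fun j => ?_
    exact Finset.single_le_sum (fun j' _ => hD0 j' ω) (Finset.mem_univ j)
  have hintsup : ∫ ω, (⨆ j : Fin K, D j ω) ∂P ≤ ∑ j : Fin K, ∫ ω, D j ω ∂P := by
    rw [← integral_finset_sum _ (fun j _ => hDint j)]
    exact integral_mono_of_nonneg (Filter.Eventually.of_forall hsup_nonneg)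
      hDsumint (Filter.Eventually.of_forall hsup_le_sum)
  have hEach : ∀ j : Fin K, ∫ ω, D j ω ∂P ≤ (16 * Real.sqrt p / Real.sqrt M) ^ p * A := by
    intro j
    exact scalar_bound 𝒳 μ hp M hM ψ hψm hψ0 hψint (g j) (hgm j) (hg j)
  have hsum_bound : ∫ ω, (⨆ j : Fin K, D j ω) ∂P
      ≤ (K:ℝ) * ((16 * Real.sqrt p / Real.sqrt M) ^ p * A) := by
    calc ∫ ω, (⨆ j : Fin K, D j ω) ∂P ≤ ∑ j : Fin K, ∫ ω, D j ω ∂P := hintsup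
      _ ≤ ∑ _j : Fin K, (16 * Real.sqrt p / Real.sqrt M) ^ p * A :=
          Finset.sum_le_sum fun j _ => hEach j
      _ = (K:ℝ) * ((16 * Real.sqrt p / Real.sqrt M) ^ p * A) := by
          rw [Finset.sum_const, nsmul_eq_mul]
          simp
  -- take p-th roots
  have hLHS0 : 0 ≤ ∫ ω, (⨆ j : Fin K, D j ω) ∂P := integral_nonneg hsup_nonneg
  have hroot : (∫ ω, (⨆ j : Fin K, D j ω) ∂P) ^ ((1:ℝ)/p)
      ≤ ((K:ℝ) * ((16 * Real.sqrt p / Real.sqrt M) ^ p * A)) ^ ((1:ℝ)/p) :=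
    Real.rpow_le_rpow hLHS0 hsum_bound (by positivity)
  have hbase0 : (0:ℝ) ≤ 16 * Real.sqrt p / Real.sqrt M := by positivity
  have hsimp : ((K:ℝ) * ((16 * Real.sqrt p / Real.sqrt M) ^ p * A)) ^ ((1:ℝ)/p)
      = 16 * (K : ℝ) ^ ((1 : ℝ) / p) * Real.sqrt p * A ^ ((1 : ℝ) / p) / Real.sqrt M := by
    rw [Real.mul_rpow (Nat.cast_nonneg K)
      (mul_nonneg (Real.rpow_nonneg hbase0 p) hA0),
      Real.mul_rpow (Real.rpow_nonneg hbase0 p) hA0]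
    have hpow : ((16 * Real.sqrt p / Real.sqrt M) ^ p) ^ ((1:ℝ)/p)
        = 16 * Real.sqrt p / Real.sqrt M := by
      rw [← Real.rpow_mul hbase0, mul_one_div, div_self hp0.ne', Real.rpow_one]
    rw [hpow]
    field_simp
  calc (∫ ω, (⨆ j : Fin K, D j ω) ∂P) ^ ((1:ℝ)/p)
      ≤ ((K:ℝ) * ((16 * Real.sqrt p / Real.sqrt M) ^ p * A)) ^ ((1:ℝ)/p) := hroot
    _ = 16 * (K : ℝ) ^ ((1 : ℝ) / p) * Real.sqrt p * A ^ ((1 : ℝ) / p) / Real.sqrt M := hsimp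

end
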